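/- arXiv:2510.10850 — 5 statements merged into one kernel-verified Lean document; each statement's English description precedes it below -/
import Mathlib

section
/- The evaluation map φ(η) = Σₙ 1/(η₁⋯ηₙ) on the space of Engel sequences is Lipschitz with constant 4 with respect to the product metric d(α,β) = Σₙ 2^{−n} ρ(αₙ,βₙ). -/
open Finset

/-- Reciprocal on `ℕ∞`, with `1/∞ := 0`. -/
noncomputable def einv (x : ℕ∞) : ℝ := ((x.toNat : ℕ) : ℝ)⁻¹

/-- The metric `ρ` on `ℕ ∪ {∞}`. -/
noncomputable def rho (x y : ℕ∞) : ℝ := if x = y then 0 else einv x + einv y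

/-- The evaluation map `φ(η) = Σₙ 1/(η₁⋯ηₙ)`. -/
noncomputable def engelEval (η : ℕ → ℕ∞) : ℝ :=
  ∑' n : ℕ, ∏ k ∈ range (n + 1), einv (η k)

lemma einv_nonneg (x : ℕ∞) : 0 ≤ einv x := inv_nonneg.2 (Nat.cast_nonneg _)

lemma einv_le_half {x : ℕ∞} (hx : 2 ≤ x) : einv x ≤ 2⁻¹ := by
  rcases eq_or_ne x ⊤ with h | h
  · simp [einv, h]
  · lift x to ℕ using h
    have h2' : (2:ℝ) ≤ (x:ℝ) := by exact_mod_cast hx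
    simp only [einv, ENat.toNat_coe]
    exact inv_anti₀ (by norm_num) h2'

lemma einv_antitone {x y : ℕ∞} (hx : 2 ≤ x) (hxy : x ≤ y) : einv y ≤ einv x := by
  rcases eq_or_ne y ⊤ with h | h
  · simp [einv, h]
  · have hx' : x ≠ ⊤ := fun hh => h (top_le_iff.mp (hh ▸ hxy))
    lift y to ℕ using h
    lift x to ℕ using hx'
    have hxy' : (x:ℕ) ≤ y := by exact_mod_cast hxy
    have h2 : (2:ℕ) ≤ x := by exact_mod_cast hx
    simp only [einv, ENat.toNat_coe]
    apply inv_anti₀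
    · have : (2:ℝ) ≤ x := by exact_mod_cast h2
      linarith
    · exact_mod_cast hxy'

section Main
variable {η : ℕ → ℕ∞}

lemma all_two (h2 : 2 ≤ η 0) (hmono : ∀ n, η n ≤ η (n + 1)) (n : ℕ) : 2 ≤ η n :=
  le_trans h2 (monotone_nat_of_le_succ hmono (Nat.zero_le n))

lemma prod_nonneg' (η : ℕ → ℕ∞) (s : Finset ℕ) : 0 ≤ ∏ k ∈ s, einv (η k) :=
  Finset.prod_nonneg fun k _ => einv_nonneg _

lemma prod_le_geom (h2 : 2 ≤ η 0) (hmono : ∀ n, η n ≤ η (n + 1)) (n : ℕ) :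
    ∏ k ∈ range n, einv (η k) ≤ (2:ℝ)⁻¹ ^ n := by
  calc ∏ k ∈ range n, einv (η k) ≤ ∏ _k ∈ range n, (2:ℝ)⁻¹ :=
        Finset.prod_le_prod (fun k _ => einv_nonneg _)
          (fun k _ => einv_le_half (all_two h2 hmono k))
    _ = (2:ℝ)⁻¹ ^ n := by simp

lemma summable_P (h2 : 2 ≤ η 0) (hmono : ∀ n, η n ≤ η (n + 1)) :
    Summable (fun n => ∏ k ∈ range (n + 1), einv (η k)) := by
  apply Summable.of_nonneg_of_le (fun n => prod_nonneg' η _)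
    (fun n => prod_le_geom h2 hmono (n + 1))
  simpa using (summable_geometric_of_lt_one (by norm_num) (by norm_num :
    (2:ℝ)⁻¹ < 1)).mul_left (2:ℝ)⁻¹
    |>.congr (fun n => by rw [pow_succ]; simp [one_div])

-- key bound : P (N+i) ≤ 2⁻¹^N * einv (η N) * 2⁻¹^i
lemma key_bound (h2 : 2 ≤ η 0) (hmono : ∀ n, η n ≤ η (n + 1)) (N i : ℕ) :
    ∏ k ∈ range (N + i + 1), einv (η k) ≤ (2:ℝ)⁻¹ ^ N * einv (η N) * (2:ℝ)⁻¹ ^ i := by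
  have hmn : Monotone η := monotone_nat_of_le_succ hmono
  have h1 : N + i + 1 = N + (i + 1) := by omega
  rw [h1, Finset.prod_range_add]
  have hA : ∏ k ∈ range N, einv (η k) ≤ (2:ℝ)⁻¹ ^ N := prod_le_geom h2 hmono N
  have hB : ∏ j ∈ range (i + 1), einv (η (N + j)) ≤ einv (η N) * (2:ℝ)⁻¹ ^ i := by
    rw [Finset.prod_range_succ']
    simp only [Nat.add_zero]
    rw [mul_comm]
    apply mul_le_mul_of_nonneg_left _ (einv_nonneg _)
    calc ∏ j ∈ range i, einv (η (N + (j + 1))) ≤ ∏ _j ∈ range i, (2:ℝ)⁻¹ :=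
          Finset.prod_le_prod (fun k _ => einv_nonneg _)
            (fun k _ => einv_le_half (all_two h2 hmono _))
      _ = (2:ℝ)⁻¹ ^ i := by simp
  calc (∏ k ∈ range N, einv (η k)) * ∏ j ∈ range (i + 1), einv (η (N + j))
      ≤ (2:ℝ)⁻¹ ^ N * (einv (η N) * (2:ℝ)⁻¹ ^ i) :=
        mul_le_mul hA hB (Finset.prod_nonneg fun k _ => einv_nonneg _) (by positivity)
    _ = (2:ℝ)⁻¹ ^ N * einv (η N) * (2:ℝ)⁻¹ ^ i := by ring

end Main

/-- The evaluation map is Lipschitz with constant `4` for the product metric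
`d(α,β) = Σₙ 2^{−n} ρ(αₙ,βₙ)` (with coordinates indexed from `1`). -/
theorem engelEval_lipschitz (η η' : ℕ → ℕ∞)
    (h2 : 2 ≤ η 0) (hmono : ∀ n, η n ≤ η (n + 1))
    (h2' : 2 ≤ η' 0) (hmono' : ∀ n, η' n ≤ η' (n + 1)) :
    |engelEval η - engelEval η'| ≤
      4 * ∑' n : ℕ, (2 : ℝ)⁻¹ ^ (n + 1) * rho (η n) (η' n) := by
  have hP := summable_P h2 hmono
  have hP' := summable_P h2' hmono'
  have hrho_nonneg : ∀ n, 0 ≤ rho (η n) (η' n) := by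
    intro n
    unfold rho
    split
    · exact le_refl _
    · exact add_nonneg (einv_nonneg _) (einv_nonneg _)
  have hterm_nonneg : ∀ n, 0 ≤ (2:ℝ)⁻¹ ^ (n + 1) * rho (η n) (η' n) :=
    fun n => mul_nonneg (by positivity) (hrho_nonneg n)
  have hgeom : Summable (fun n : ℕ => (2:ℝ)⁻¹ ^ (n + 1)) :=
    ((summable_geometric_of_lt_one (by norm_num)
      (by norm_num : (2:ℝ)⁻¹ < 1)).mul_left (2:ℝ)⁻¹).congr
      (fun n => by rw [pow_succ]; ring)
  have hbound : ∀ n : ℕ, (2:ℝ)⁻¹ ^ (n + 1) * rho (η n) (η' n) ≤ (2:ℝ)⁻¹ ^ (n + 1) := by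
    intro n
    have hle : rho (η n) (η' n) ≤ 1 := by
      unfold rho
      split
      · norm_num
      · have a1 := einv_le_half (all_two h2 hmono n)
        have a2 := einv_le_half (all_two h2' hmono' n)
        linarith
    calc (2:ℝ)⁻¹ ^ (n + 1) * rho (η n) (η' n) ≤ (2:ℝ)⁻¹ ^ (n + 1) * 1 :=
          mul_le_mul_of_nonneg_left hle (by positivity)
      _ = (2:ℝ)⁻¹ ^ (n + 1) := mul_one _
  have hrhs : Summable (fun n => (2:ℝ)⁻¹ ^ (n + 1) * rho (η n) (η' n)) :=
    Summable.of_nonneg_of_le hterm_nonneg hbound hgeom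
  by_cases heq : ∀ n, η n = η' n
  · have hee : engelEval η = engelEval η' := by
      unfold engelEval
      exact tsum_congr fun n => Finset.prod_congr rfl fun k _ => by rw [heq k]
    rw [hee, sub_self, abs_zero]
    exact mul_nonneg (by norm_num) (tsum_nonneg hterm_nonneg)
  · push_neg at heq
    set N := Nat.find heq with hNdef
    have hN : η N ≠ η' N := Nat.find_spec heq
    have hpre : ∀ k < N, η k = η' k := fun k hk => not_not.mp (Nat.find_min heq hk)
    have hsplit : engelEval η - engelEval η' =
        ∑' i : ℕ, (∏ k ∈ range (i + N + 1), einv (η k)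
          - ∏ k ∈ range (i + N + 1), einv (η' k)) := by
      unfold engelEval
      rw [← hP.sum_add_tsum_nat_add N, ← hP'.sum_add_tsum_nat_add N]
      have hpresum : ∑ n ∈ range N, ∏ k ∈ range (n + 1), einv (η k)
          = ∑ n ∈ range N, ∏ k ∈ range (n + 1), einv (η' k) := by
        apply Finset.sum_congr rfl
        intro n hn
        apply Finset.prod_congr rfl
        intro k hk
        rw [hpre k (by have := mem_range.mp hn; have := mem_range.mp hk; omega)]
      rw [hpresum, Summable.tsum_sub ((summable_nat_add_iff N).mpr hP)
        ((summable_nat_add_iff N).mpr hP')]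
      ring
    rw [hsplit]
    have hCsum : Summable (fun i : ℕ =>
        (2:ℝ)⁻¹ ^ N * (einv (η N) + einv (η' N)) * (2:ℝ)⁻¹ ^ i) :=
      (summable_geometric_of_lt_one (by norm_num) (by norm_num : (2:ℝ)⁻¹ < 1)).mul_left _
    have habs : |∑' i : ℕ, (∏ k ∈ range (i + N + 1), einv (η k)
          - ∏ k ∈ range (i + N + 1), einv (η' k))|
        ≤ ∑' i : ℕ, (2:ℝ)⁻¹ ^ N * (einv (η N) + einv (η' N)) * (2:ℝ)⁻¹ ^ i := by
      have := tsum_of_norm_bounded hCsum.hasSum (f := fun i : ℕ =>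
          (∏ k ∈ range (i + N + 1), einv (η k)
            - ∏ k ∈ range (i + N + 1), einv (η' k))) ?_
      · simpa [Real.norm_eq_abs] using this
      · intro i
        rw [Real.norm_eq_abs]
        have b1 : ∏ k ∈ range (i + N + 1), einv (η k)
            ≤ (2:ℝ)⁻¹ ^ N * einv (η N) * (2:ℝ)⁻¹ ^ i := by
          rw [show i + N + 1 = N + i + 1 by omega]
          exact key_bound h2 hmono N i
        have b2 : ∏ k ∈ range (i + N + 1), einv (η' k)
            ≤ (2:ℝ)⁻¹ ^ N * einv (η' N) * (2:ℝ)⁻¹ ^ i := by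
          rw [show i + N + 1 = N + i + 1 by omega]
          exact key_bound h2' hmono' N i
        have n1 := prod_nonneg' η (range (i + N + 1))
        have n2 := prod_nonneg' η' (range (i + N + 1))
        rw [abs_sub_le_iff]
        constructor <;> nlinarith
    calc |∑' i : ℕ, (∏ k ∈ range (i + N + 1), einv (η k)
            - ∏ k ∈ range (i + N + 1), einv (η' k))|
        ≤ ∑' i : ℕ, (2:ℝ)⁻¹ ^ N * (einv (η N) + einv (η' N)) * (2:ℝ)⁻¹ ^ i := habs
      _ = 4 * ((2:ℝ)⁻¹ ^ (N + 1) * rho (η N) (η' N)) := by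
          rw [tsum_mul_left, tsum_geometric_of_lt_one (by norm_num)
            (by norm_num : (2:ℝ)⁻¹ < 1)]
          rw [rho, if_neg hN, pow_succ]
          norm_num
          ring
      _ ≤ 4 * ∑' n : ℕ, (2:ℝ)⁻¹ ^ (n + 1) * rho (η n) (η' n) :=
          mul_le_mul_of_nonneg_left (hrhs.le_tsum N (fun i _ => hterm_nonneg i))
            (by norm_num)
end

section
/- If η is an Engel sequence with all digits finite natural numbers and ηₙ → ∞, then φ(η) is irrational. -/
open Finset Filter

/-- If `η` is a nondecreasing sequence of integers `≥ 2` tending to infinity, then the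
value of the Engel series `Σₙ 1/(η₁⋯ηₙ)` is irrational. -/
theorem engelEval_irrational (η : ℕ → ℕ)
    (h2 : 2 ≤ η 0) (hmono : ∀ n, η n ≤ η (n + 1))
    (htop : Tendsto η atTop atTop) :
    Irrational (∑' n : ℕ, ∏ k ∈ range (n + 1), ((η k : ℝ))⁻¹) := by
  have hm : Monotone η := monotone_nat_of_le_succ hmono
  have h2' : ∀ k, 2 ≤ η k := fun k => h2.trans (hm (Nat.zero_le k))
  set f : ℕ → ℝ := fun n => ∏ k ∈ range (n + 1), ((η k : ℝ))⁻¹ with hf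
  have hηpos : ∀ k, (0:ℝ) < η k := fun k => by
    have := h2' k; exact_mod_cast lt_of_lt_of_le (by norm_num) this
  have fpos : ∀ n, 0 < f n := fun n => prod_pos fun k _ => inv_pos.2 (hηpos k)
  have fle : ∀ n, f n ≤ (2:ℝ)⁻¹ ^ (n + 1) := by
    intro n
    calc f n ≤ ∏ k ∈ range (n+1), (2:ℝ)⁻¹ :=
          prod_le_prod (fun k _ => (inv_pos.2 (hηpos k)).le)
            (fun k _ => inv_anti₀ (by norm_num) (by exact_mod_cast h2' k))
      _ = (2:ℝ)⁻¹ ^ (n+1) := by simp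
  have hsum : Summable f := by
    refine Summable.of_nonneg_of_le (fun n => (fpos n).le) fle ?_
    simpa [pow_succ, mul_comm] using
      (summable_geometric_of_lt_one (by norm_num) (by norm_num : (2:ℝ)⁻¹ < 1)).mul_left (2:ℝ)⁻¹
  rintro ⟨r, hr⟩
  obtain ⟨N, hN⟩ := (htop.eventually_ge_atTop (r.den + 2)).exists
  set P : ℕ → ℕ := fun n => ∏ k ∈ range n, η k with hP
  have hPpos : ∀ n, 0 < P n := fun n => prod_pos fun k _ => by have := h2' k; omega
  have hsumT : Summable (fun n => f (n + N)) := (summable_nat_add_iff N).2 hsum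
  set T : ℝ := ∑' n : ℕ, f (n + N) with hT
  have hTpos : 0 < T := Summable.tsum_pos hsumT (fun n => (fpos _).le) 0 (fpos _)
  have hsplit : (∑ i ∈ range N, f i) + T = ∑' n, f n := Summable.sum_add_tsum_nat_add N hsum
  -- term identity
  have hterm : ∀ n, (P N : ℝ) * f (n + N) = (∏ k ∈ Ico N (n + N + 1), (η k : ℝ))⁻¹ := by
    intro n
    have hsplitp : (∏ k ∈ range N, (η k : ℝ)) * ∏ k ∈ Ico N (n + N + 1), (η k : ℝ)
        = ∏ k ∈ range (n + N + 1), (η k : ℝ) :=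
      prod_range_mul_prod_Ico _ (by omega)
    have hfval : f (n + N) = (∏ k ∈ range (n + N + 1), (η k : ℝ))⁻¹ := by
      simp [hf, prod_inv_distrib]
    have hPN : (P N : ℝ) = ∏ k ∈ range N, (η k : ℝ) := by push_cast [hP]; ring
    have h1 : (∏ k ∈ range N, (η k : ℝ)) ≠ 0 := ne_of_gt (prod_pos fun k _ => hηpos k)
    rw [hfval, hPN, ← hsplitp, mul_inv, ← mul_assoc, mul_inv_cancel₀ h1, one_mul]
  -- term bound
  have htermle : ∀ n, (P N : ℝ) * f (n + N) ≤ ((η N : ℝ)⁻¹) ^ (n + 1) := by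
    intro n
    rw [hterm n, inv_pow]
    refine inv_anti₀ (pow_pos (hηpos N) _) ?_
    calc (η N : ℝ) ^ (n + 1) = ∏ _k ∈ Ico N (n + N + 1), (η N : ℝ) := by
          rw [prod_const, Nat.card_Ico]; congr 1; omega
      _ ≤ ∏ k ∈ Ico N (n + N + 1), (η k : ℝ) :=
          prod_le_prod (fun _ _ => (hηpos N).le)
            (fun k hk => by exact_mod_cast hm (mem_Ico.1 hk).1)
  have hη1 : (0:ℝ) ≤ (η N : ℝ)⁻¹ := by positivity
  have hη2 : (η N : ℝ)⁻¹ < 1 := by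
    rw [inv_lt_one_iff₀]; right; exact_mod_cast lt_of_lt_of_le one_lt_two (by exact_mod_cast h2' N)
  have hgeo : Summable (fun n : ℕ => ((η N : ℝ)⁻¹) ^ (n + 1)) := by
    simpa [pow_succ, mul_comm] using (summable_geometric_of_lt_one hη1 hη2).mul_left ((η N : ℝ)⁻¹)
  have hgeoval : (∑' n : ℕ, ((η N : ℝ)⁻¹) ^ (n + 1)) = (η N : ℝ)⁻¹ * (1 - (η N : ℝ)⁻¹)⁻¹ := by
    calc (∑' n : ℕ, ((η N : ℝ)⁻¹) ^ (n + 1)) = ∑' n : ℕ, (η N : ℝ)⁻¹ * ((η N : ℝ)⁻¹) ^ n := by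
          simp [pow_succ, mul_comm]
      _ = (η N : ℝ)⁻¹ * ∑' n : ℕ, ((η N : ℝ)⁻¹) ^ n := tsum_mul_left
      _ = (η N : ℝ)⁻¹ * (1 - (η N : ℝ)⁻¹)⁻¹ := by rw [tsum_geometric_of_lt_one hη1 hη2]
  have htail : (P N : ℝ) * T ≤ (η N : ℝ)⁻¹ * (1 - (η N : ℝ)⁻¹)⁻¹ := by
    rw [hT, ← tsum_mul_left, ← hgeoval]
    exact Summable.tsum_le_tsum htermle (hsumT.mul_left _) hgeo
  -- the geometric bound is small
  have hηN : (r.den : ℝ) + 2 ≤ (η N : ℝ) := by exact_mod_cast hN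
  have hsmall : (r.den : ℝ) * ((P N : ℝ) * T) < 1 := by
    have hne : (η N : ℝ) ≠ 0 := (hηpos N).ne'
    have hd0 : (0:ℝ) ≤ (r.den : ℝ) := by positivity
    have hb : ((η N : ℝ) - 1) ≠ 0 := by linarith
    have hc : (1:ℝ) - (η N : ℝ)⁻¹ ≠ 0 := (sub_pos.2 hη2).ne'
    have h1 : (η N : ℝ)⁻¹ * (1 - (η N : ℝ)⁻¹)⁻¹ = ((η N : ℝ) - 1)⁻¹ := by
      field_simp
    have : (r.den : ℝ) * ((P N : ℝ) * T) ≤ (r.den : ℝ) * ((η N : ℝ) - 1)⁻¹ := by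
      rw [← h1]
      exact mul_le_mul_of_nonneg_left htail (by positivity)
    refine lt_of_le_of_lt this ?_
    rw [← div_eq_mul_inv, div_lt_one (by linarith)]
    linarith
  have hspos : 0 < (r.den : ℝ) * ((P N : ℝ) * T) := by
    have := hPpos N
    have : (0:ℝ) < P N := by exact_mod_cast this
    have hd : (0:ℝ) < r.den := by exact_mod_cast r.pos
    positivity
  -- integrality
  set A : ℤ := r.num * P N - (r.den : ℤ) * ∑ n ∈ range N, (∏ k ∈ Ico (n + 1) N, η k : ℤ) with hA
  have hint : (r.den : ℝ) * ((P N : ℝ) * T) = (A : ℝ) := by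
    have hTval : T = (r : ℝ) - ∑ i ∈ range N, f i := by
      rw [← hr] at hsplit; linarith
    have hqr : (r.den : ℝ) * (r : ℝ) = (r.num : ℝ) := by
      rw [Rat.cast_def]
      have : (r.den : ℝ) ≠ 0 := by exact_mod_cast r.den_nz
      field_simp
    have hPNf : ∀ n ∈ range N, (P N : ℝ) * f n = ((∏ k ∈ Ico (n + 1) N, η k : ℕ) : ℝ) := by
      intro n hn
      have hn' : n + 1 ≤ N := mem_range.1 hn
      have hsplitp : (∏ k ∈ range (n + 1), (η k : ℝ)) * ∏ k ∈ Ico (n + 1) N, (η k : ℝ)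
          = ∏ k ∈ range N, (η k : ℝ) := prod_range_mul_prod_Ico _ hn'
      have hPN : (P N : ℝ) = ∏ k ∈ range N, (η k : ℝ) := by push_cast [hP]; ring
      have hfval : f n = (∏ k ∈ range (n + 1), (η k : ℝ))⁻¹ := by
        simp [hf, prod_inv_distrib]
      have h1 : (∏ k ∈ range (n + 1), (η k : ℝ)) ≠ 0 := ne_of_gt (prod_pos fun k _ => hηpos k)
      rw [hfval, hPN, ← hsplitp, mul_comm (∏ k ∈ range (n+1), (η k:ℝ)), mul_assoc,
        mul_inv_cancel₀ h1, mul_one]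
      push_cast
      ring
    calc (r.den : ℝ) * ((P N : ℝ) * T)
        = (r.den : ℝ) * ((P N : ℝ) * (r : ℝ)) -
            (r.den : ℝ) * ∑ n ∈ range N, (P N : ℝ) * f n := by
          rw [hTval, mul_sub, mul_sub, Finset.mul_sum]
      _ = (r.num : ℝ) * (P N : ℝ) -
            (r.den : ℝ) * ∑ n ∈ range N, ((∏ k ∈ Ico (n + 1) N, η k : ℕ) : ℝ) := by
          rw [sum_congr rfl hPNf]; rw [show (r.den : ℝ) * ((P N : ℝ) * (r:ℝ))
            = ((r.den : ℝ) * (r:ℝ)) * (P N : ℝ) by ring, hqr]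
      _ = (A : ℝ) := by push_cast [hA]; ring
  rw [hint] at hspos hsmall
  have h1A : (1 : ℤ) ≤ A := by exact_mod_cast hspos
  have : (1:ℝ) ≤ (A:ℝ) := by exact_mod_cast h1A
  linarith
end

section
/- The composition φ ∘ f is the identity on (0,1]: evaluating the nonterminating Engel digit sequence of x recovers x. -/
open Finset

/-- The first Engel digit `d₁(x) = ⌊1/x⌋ + 1`. -/
noncomputable def engelD1 (x : ℝ) : ℕ := ⌊1 / x⌋₊ + 1

/-- The Engel map `T(x) = d₁(x)·x − 1`. -/
noncomputable def engelT (x : ℝ) : ℝ := (engelD1 x : ℝ) * x - 1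

/-- The `n`-th Engel digit (0-indexed): `dₙ₊₁(x) = d₁(Tⁿ(x))`. -/
noncomputable def engelDigit (x : ℝ) (n : ℕ) : ℕ := engelD1 (engelT^[n] x)

lemma engelD1_ge_two {x : ℝ} (hx : x ∈ Set.Ioc (0:ℝ) 1) : 2 ≤ engelD1 x := by
  have h1 : (1:ℝ) ≤ 1 / x := (le_div_iff₀ hx.1).2 (by linarith [hx.2])
  have h2 : 1 ≤ ⌊1 / x⌋₊ := Nat.le_floor (by exact_mod_cast h1)
  unfold engelD1; omega

lemma engelT_mem {x : ℝ} (hx : x ∈ Set.Ioc (0:ℝ) 1) : engelT x ∈ Set.Ioc (0:ℝ) 1 := by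
  have hx0 := hx.1
  have hlt : 1 / x < (engelD1 x : ℝ) := by
    have := Nat.lt_floor_add_one (1 / x)
    simpa [engelD1] using this
  have hle : (⌊1 / x⌋₊ : ℝ) ≤ 1 / x := Nat.floor_le (by positivity)
  have hxx : (1 / x) * x = 1 := by field_simp
  constructor
  · simp only [engelT]
    nlinarith [hlt, hx0]
  · simp only [engelT, engelD1, Nat.cast_add, Nat.cast_one]
    nlinarith [hx.2, hle, hx0]

lemma engelT_iter_mem {x : ℝ} (hx : x ∈ Set.Ioc (0:ℝ) 1) (n : ℕ) :
    engelT^[n] x ∈ Set.Ioc (0:ℝ) 1 := by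
  induction n with
  | zero => simpa using hx
  | succ n ih =>
    rw [Function.iterate_succ_apply']
    exact engelT_mem ih

/-- `φ ∘ f = id` on `(0,1]`: evaluating the nonterminating Engel digit sequence of `x`
recovers `x`. -/
theorem engelEval_engelCoding (x : ℝ) (hx : x ∈ Set.Ioc (0 : ℝ) 1) :
    (∑' n : ℕ, ∏ k ∈ range (n + 1), ((engelDigit x k : ℝ))⁻¹) = x := by
  set f : ℕ → ℝ := fun n => ∏ k ∈ range (n + 1), ((engelDigit x k : ℝ))⁻¹ with hf
  have hd2 : ∀ n, 2 ≤ engelDigit x n := fun n => engelD1_ge_two (engelT_iter_mem hx n)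
  have hdpos : ∀ n, (0:ℝ) < (engelDigit x n : ℝ) := fun n => by
    have := hd2 n; positivity
  have hinv : ∀ n, ((engelDigit x n : ℝ))⁻¹ ≤ 2⁻¹ := fun n => by
    have := hd2 n
    apply inv_anti₀ (by norm_num)
    exact_mod_cast this
  have key : ∀ N, x = (∑ n ∈ range N, f n) +
      (∏ k ∈ range N, ((engelDigit x k : ℝ))⁻¹) * engelT^[N] x := by
    intro N
    induction N with
    | zero => simp
    | succ N ih =>
      rw [Finset.sum_range_succ, Finset.prod_range_succ, Function.iterate_succ_apply']
      have hy : engelT (engelT^[N] x) = (engelDigit x N : ℝ) * engelT^[N] x - 1 := by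
        simp [engelT, engelDigit]
      have hne : ((engelDigit x N : ℝ)) ≠ 0 := ne_of_gt (hdpos N)
      rw [hy]
      have hfN : f N = (∏ k ∈ range N, ((engelDigit x k : ℝ))⁻¹) * ((engelDigit x N:ℝ))⁻¹ := by
        rw [hf]; exact Finset.prod_range_succ _ N
      have h : (∏ k ∈ range N, ((engelDigit x k : ℝ))⁻¹) * ((engelDigit x N:ℝ))⁻¹ *
          ((engelDigit x N : ℝ) * engelT^[N] x - 1) =
          (∏ k ∈ range N, ((engelDigit x k : ℝ))⁻¹) * engelT^[N] x - f N := by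
        rw [hfN, mul_sub, mul_one, mul_assoc, inv_mul_cancel_left₀ hne]
      linarith [ih, h]
  -- remainder bound
  have hrem : ∀ N, (0:ℝ) ≤ (∏ k ∈ range N, ((engelDigit x k : ℝ))⁻¹) * engelT^[N] x ∧
      (∏ k ∈ range N, ((engelDigit x k : ℝ))⁻¹) * engelT^[N] x ≤ (2⁻¹:ℝ)^N := by
    intro N
    have hmem := engelT_iter_mem hx N
    have hp0 : (0:ℝ) ≤ ∏ k ∈ range N, ((engelDigit x k : ℝ))⁻¹ :=
      Finset.prod_nonneg fun k _ => by positivity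
    constructor
    · exact mul_nonneg hp0 hmem.1.le
    · calc (∏ k ∈ range N, ((engelDigit x k : ℝ))⁻¹) * engelT^[N] x
          ≤ (∏ k ∈ range N, ((engelDigit x k : ℝ))⁻¹) * 1 := by
            exact mul_le_mul_of_nonneg_left hmem.2 hp0
        _ = ∏ k ∈ range N, ((engelDigit x k : ℝ))⁻¹ := mul_one _
        _ ≤ ∏ k ∈ range N, (2⁻¹:ℝ) := by
            apply Finset.prod_le_prod (fun k _ => by positivity) (fun k _ => hinv k)
        _ = (2⁻¹:ℝ)^N := by simp
  have htend : Filter.Tendsto (fun N => ∑ n ∈ range N, f n) Filter.atTop (nhds x) := by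
    have h1 : Filter.Tendsto
        (fun N => (∏ k ∈ range N, ((engelDigit x k : ℝ))⁻¹) * engelT^[N] x)
        Filter.atTop (nhds 0) := by
      apply squeeze_zero (fun N => (hrem N).1) (fun N => (hrem N).2)
      exact tendsto_pow_atTop_nhds_zero_of_lt_one (by norm_num) (by norm_num)
    have : (fun N => ∑ n ∈ range N, f n) =
        fun N => x - (∏ k ∈ range N, ((engelDigit x k : ℝ))⁻¹) * engelT^[N] x := by
      funext N; linarith [key N]
    rw [this]
    simpa using Filter.Tendsto.sub (tendsto_const_nhds (x := x)) h1
  have hnn : ∀ n, 0 ≤ f n := fun n => Finset.prod_nonneg fun k _ => by positivity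
  have : HasSum f x := (hasSum_iff_tendsto_nat_of_nonneg hnn x).2 htend
  exact this.tsum_eq
end

section
/- The Engel digit coding map f : (0,1] → Σ_E is continuous at every irrational point of (0,1]. -/
/-- The Engel digit coding map `f`, valued in `(ℕ∞)^ℕ` with the product topology. -/
noncomputable def engelCoding (x : ℝ) : ℕ → ℕ∞ := fun n => (engelDigit x n : ℕ∞)

lemma natFloor_eventually_eq (w : ℝ) (hw : Irrational w) :
    ∀ᶠ z in nhds w, ⌊z⌋₊ = ⌊w⌋₊ := by
  rcases lt_or_ge w 0 with h | h
  · have : Set.Iio (0 : ℝ) ∈ nhds w := Iio_mem_nhds h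
    filter_upwards [this] with z hz
    rw [Nat.floor_eq_zero.2 (lt_trans hz one_pos),
      Nat.floor_eq_zero.2 (lt_trans h one_pos)]
  · have hne : (⌊w⌋₊ : ℝ) ≠ w := by
      intro he; exact hw ⟨(⌊w⌋₊ : ℚ), by exact_mod_cast he⟩
    have h1 : (⌊w⌋₊ : ℝ) < w := lt_of_le_of_ne (Nat.floor_le h) hne
    have h2 : w < (⌊w⌋₊ : ℝ) + 1 := Nat.lt_floor_add_one w
    have : Set.Ioo ((⌊w⌋₊ : ℝ)) ((⌊w⌋₊ : ℝ) + 1) ∈ nhds w := Ioo_mem_nhds h1 h2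
    filter_upwards [this] with z hz
    refine Nat.floor_eq_iff ?_ |>.2 ⟨le_of_lt hz.1, hz.2⟩
    exact le_trans (Nat.cast_nonneg _) (le_of_lt hz.1)

lemma engelD1_eventually_eq (y : ℝ) (hy : Irrational y) :
    ∀ᶠ z in nhds y, engelD1 z = engelD1 y := by
  have hcont : ContinuousAt (fun z : ℝ => 1 / z) y := by
    simpa [one_div] using (continuousAt_inv₀ hy.ne_zero)
  have hfl := hcont.eventually (natFloor_eventually_eq (1 / y)
    (by simpa [one_div] using hy.inv))
  filter_upwards [hfl] with z hz
  simp only [engelD1, one_div] at hz ⊢; rw [hz]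

lemma engelT_irrational (y : ℝ) (hy : Irrational y) : Irrational (engelT y) := by
  have h1 : Irrational ((engelD1 y : ℝ) * y) :=
    hy.natCast_mul (by simp [engelD1])
  have := h1.add_intCast (-1)
  have he : engelT y = (engelD1 y : ℝ) * y + ((-1 : ℤ) : ℝ) := by
    simp [engelT, sub_eq_add_neg]
  rw [he]; exact this

lemma engelT_iter (x : ℝ) (hx : Irrational x) (n : ℕ) :
    ContinuousAt (engelT^[n]) x ∧ Irrational (engelT^[n] x) := by
  induction n with
  | zero => exact ⟨continuousAt_id, hx⟩
  | succ n ih =>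
    obtain ⟨hc, hi⟩ := ih
    refine ⟨?_, ?_⟩
    · rw [Function.iterate_succ']
      refine ContinuousAt.comp ?_ hc
      have hev := engelD1_eventually_eq _ hi
      have : ContinuousAt (fun z : ℝ => (engelD1 (engelT^[n] x) : ℝ) * z - 1)
          (engelT^[n] x) := by fun_prop
      refine this.congr ?_
      filter_upwards [hev] with z hz
      simp [engelT, hz]
    · rw [Function.iterate_succ', Function.comp_apply]
      exact engelT_irrational _ hi

/-- The Engel digit coding map `f : (0,1] → Σ_E` is continuous at every irrational
point of `(0,1]`. -/
theorem engelCoding_continuousAt_irrational (x : ℝ) (hx : x ∈ Set.Ioc (0 : ℝ) 1)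
    (hirr : Irrational x) :
    ContinuousWithinAt engelCoding (Set.Ioc (0 : ℝ) 1) x := by
  refine ContinuousAt.continuousWithinAt ?_
  rw [show engelCoding = fun z n => ((engelDigit z n : ℕ) : ℕ∞) from rfl]
  refine continuousAt_pi.2 fun n => ?_
  obtain ⟨hc, hi⟩ := engelT_iter x hirr n
  have hev : ∀ᶠ z in nhds x, engelDigit z n = engelDigit x n := by
    have := hc.eventually (engelD1_eventually_eq _ hi)
    filter_upwards [this] with z hz
    simpa [engelDigit] using hz
  have heq : (fun z => ((engelDigit z n : ℕ) : ℕ∞)) =ᶠ[nhds x]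
      (fun _ => ((engelDigit x n : ℕ) : ℕ∞)) := by
    filter_upwards [hev] with z hz; rw [hz]
  exact ContinuousAt.congr continuousAt_const heq.symm
end

section
/- At every rational x ∈ (0,1], the Engel digit coding map f is left-continuous but not right-continuous. -/
open Filter

open Set

lemma engelD1_gt {x : ℝ} (_hx : 0 < x) : 1/x < (engelD1 x : ℝ) := by
  have := Nat.lt_floor_add_one (1/x)
  simpa [engelD1] using this

lemma engelD1_le {x : ℝ} (hx : 0 < x) : ((engelD1 x : ℝ) - 1) ≤ 1/x := by
  have : (⌊1/x⌋₊ : ℝ) ≤ 1/x := Nat.floor_le (by positivity)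
  simpa [engelD1] using this

lemma engelT_pos {x : ℝ} (hx : 0 < x) : 0 < engelT x := by
  have h := engelD1_gt hx
  rw [div_lt_iff₀ hx] at h
  simp only [engelT]; linarith

lemma engelT_le {x : ℝ} (hx : 0 < x) : engelT x ≤ x := by
  have h := engelD1_le hx
  have h2 : ((engelD1 x : ℝ) - 1) * x ≤ 1 := by
    have := mul_le_mul_of_nonneg_right h hx.le
    rwa [one_div_mul_cancel hx.ne'] at this
  simp only [engelT]; nlinarith

lemma iter_pos {x : ℝ} (hx : 0 < x) (n : ℕ) : 0 < engelT^[n] x := by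
  induction n with
  | zero => simpa using hx
  | succ n ih => rw [Function.iterate_succ_apply']; exact engelT_pos ih

lemma iter_le {x : ℝ} (hx : 0 < x) (n : ℕ) : engelT^[n] x ≤ x := by
  induction n with
  | zero => simp
  | succ n ih =>
    rw [Function.iterate_succ_apply']
    exact (engelT_le (iter_pos hx n)).trans ih

/-- one-step left stability -/
lemma left_step {w : ℝ} (hw0 : 0 < w) {δ : ℝ} (hδ : 0 < δ) :
    ∃ ε > 0, ∀ y : ℝ, w - ε < y → y ≤ w →
      engelD1 y = engelD1 w ∧ engelT w - δ < engelT y ∧ engelT y ≤ engelT w := by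
  set m := ⌊1/w⌋₊ with hm
  have hmw : 1/w < (m : ℝ) + 1 := Nat.lt_floor_add_one _
  have hm1pos : (0:ℝ) < (m : ℝ) + 1 := by positivity
  have hw1 : 1/((m:ℝ)+1) < w := by
    rw [div_lt_iff₀ hw0] at hmw
    rw [div_lt_iff₀ hm1pos]; nlinarith
  refine ⟨min (w - 1/((m:ℝ)+1)) (δ/((m:ℝ)+1)), lt_min (by linarith) (by positivity), ?_⟩
  intro y hy1 hy2
  have hylb : 1/((m:ℝ)+1) < y := by
    have := min_le_left (w - 1/((m:ℝ)+1)) (δ/((m:ℝ)+1)); linarith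
  have hy0 : 0 < y := lt_trans (by positivity) hylb
  have hfloor : ⌊1/y⌋₊ = m := by
    rw [Nat.floor_eq_iff (by positivity)]
    constructor
    · calc (m:ℝ) ≤ 1/w := Nat.floor_le (by positivity)
        _ ≤ 1/y := by apply one_div_le_one_div_of_le hy0 hy2
    · rw [div_lt_iff₀ hy0]
      rw [div_lt_iff₀ hm1pos] at hylb
      nlinarith
  have hd : engelD1 y = engelD1 w := by simp only [engelD1, hfloor, ← hm]
  refine ⟨hd, ?_, ?_⟩
  · have hle : w - y < δ/((m:ℝ)+1) := by
      have := min_le_right (w - 1/((m:ℝ)+1)) (δ/((m:ℝ)+1)); linarith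
    have hdw : (engelD1 w : ℝ) = (m:ℝ) + 1 := by simp [engelD1, hm]
    have hle' : (w - y) * ((m:ℝ)+1) < δ := (lt_div_iff₀ hm1pos).1 hle
    simp only [engelT, hd, hdw]
    nlinarith
  · have hdw : (engelD1 w : ℝ) = (m:ℝ) + 1 := by simp [engelD1, hm]
    simp only [engelT, hd, hdw]
    nlinarith

/-- one-step right stability, at a point where 1/w is not attained by its floor -/
lemma right_step {w : ℝ} (hw0 : 0 < w) (hni : (⌊1/w⌋₊ : ℝ) < 1/w) {δ : ℝ} (hδ : 0 < δ) :
    ∃ ε > 0, ∀ u : ℝ, w ≤ u → u < w + ε →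
      engelD1 u = engelD1 w ∧ engelT w ≤ engelT u ∧ engelT u < engelT w + δ ∧
      (w < u → engelT w < engelT u) := by
  set m := ⌊1/w⌋₊ with hm
  have hm1pos : (0:ℝ) < (m : ℝ) + 1 := by positivity
  have hmw : (m:ℝ) * w < 1 := by
    rw [lt_div_iff₀ hw0] at hni; linarith
  refine ⟨min ((1 - (m:ℝ)*w)/((m:ℝ)+1)) (δ/((m:ℝ)+1)),
    lt_min (div_pos (by linarith) hm1pos) (by positivity), ?_⟩
  intro u hu1 hu2
  have hu0 : 0 < u := lt_of_lt_of_le hw0 hu1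
  have hub : u < w + (1 - (m:ℝ)*w)/((m:ℝ)+1) := by
    have := min_le_left ((1 - (m:ℝ)*w)/((m:ℝ)+1)) (δ/((m:ℝ)+1)); linarith
  have hmu : (m:ℝ) * u < 1 := by
    have h1 : ((m:ℝ)+1) * (u - w) < 1 - (m:ℝ)*w := (lt_div_iff₀' hm1pos).1 (by linarith)
    nlinarith
  have hfloor : ⌊1/u⌋₊ = m := by
    rw [Nat.floor_eq_iff (by positivity)]
    constructor
    · rw [le_div_iff₀ hu0]; linarith
    · calc 1/u ≤ 1/w := one_div_le_one_div_of_le hw0 hu1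
        _ < (m:ℝ) + 1 := Nat.lt_floor_add_one _
  have hd : engelD1 u = engelD1 w := by simp only [engelD1, hfloor, ← hm]
  have hdw : (engelD1 w : ℝ) = (m:ℝ) + 1 := by simp [engelD1, hm]
  have hle : u - w < δ/((m:ℝ)+1) := by
    have := min_le_right ((1 - (m:ℝ)*w)/((m:ℝ)+1)) (δ/((m:ℝ)+1)); linarith
  have hle' : (u - w) * ((m:ℝ)+1) < δ := (lt_div_iff₀ hm1pos).1 hle
  refine ⟨hd, ?_, ?_, ?_⟩ <;> simp only [engelT, hd, hdw] 
  · nlinarith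
  · nlinarith
  · intro h; nlinarith

lemma left_iter {x : ℝ} (hx0 : 0 < x) (n : ℕ) {δ : ℝ} (hδ : 0 < δ) :
    ∃ ε > 0, ∀ y : ℝ, x - ε < y → y ≤ x →
      (∀ j < n, engelDigit y j = engelDigit x j) ∧
      engelT^[n] x - δ < engelT^[n] y ∧ engelT^[n] y ≤ engelT^[n] x := by
  induction n generalizing δ with
  | zero =>
    exact ⟨δ, hδ, fun y h1 h2 => ⟨fun j hj => absurd hj (Nat.not_lt_zero j),
      by simpa using h1, by simpa using h2⟩⟩
  | succ n ih =>
    obtain ⟨ε', hε', hstep⟩ := left_step (iter_pos hx0 n) hδ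
    obtain ⟨ε, hε, hiter⟩ := ih hε'
    refine ⟨ε, hε, fun y h1 h2 => ?_⟩
    obtain ⟨hdig, hlo, hhi⟩ := hiter y h1 h2
    obtain ⟨hd, hlo', hhi'⟩ := hstep (engelT^[n] y) (by linarith) hhi
    refine ⟨fun j hj => ?_, ?_, ?_⟩
    · rcases Nat.lt_succ_iff_lt_or_eq.1 hj with h | h
      · exact hdig j h
      · subst h; simpa [engelDigit] using hd
    · rw [Function.iterate_succ_apply', Function.iterate_succ_apply']; exact hlo'
    · rw [Function.iterate_succ_apply', Function.iterate_succ_apply']; exact hhi'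

lemma right_iter {x : ℝ} (hx0 : 0 < x) (n : ℕ)
    (hni : ∀ j < n, (⌊1/(engelT^[j] x)⌋₊ : ℝ) < 1/(engelT^[j] x)) {δ : ℝ} (hδ : 0 < δ) :
    ∃ ε > 0, ∀ z : ℝ, x < z → z < x + ε →
      (∀ j < n, engelDigit z j = engelDigit x j) ∧
      engelT^[n] x < engelT^[n] z ∧ engelT^[n] z < engelT^[n] x + δ := by
  induction n generalizing δ with
  | zero =>
    exact ⟨δ, hδ, fun z h1 h2 => ⟨fun j hj => absurd hj (Nat.not_lt_zero j),
      by simpa using h1, by simpa using h2⟩⟩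
  | succ n ih =>
    obtain ⟨ε', hε', hstep⟩ := right_step (iter_pos hx0 n) (hni n (Nat.lt_succ_self n)) hδ
    obtain ⟨ε, hε, hiter⟩ := ih (fun j hj => hni j (hj.trans (Nat.lt_succ_self n))) hε'
    refine ⟨ε, hε, fun z h1 h2 => ?_⟩
    obtain ⟨hdig, hlo, hhi⟩ := hiter z h1 h2
    obtain ⟨hd, _, hhi', hstrict⟩ := hstep (engelT^[n] z) hlo.le hhi
    refine ⟨fun j hj => ?_, ?_, ?_⟩
    · rcases Nat.lt_succ_iff_lt_or_eq.1 hj with h | h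
      · exact hdig j h
      · subst h; simpa [engelDigit] using hd
    · rw [Function.iterate_succ_apply', Function.iterate_succ_apply']; exact hstrict hlo
    · rw [Function.iterate_succ_apply', Function.iterate_succ_apply']; exact hhi'

/-- rational step: engelT of a rational in (0,1] with numerator ≥ 2 is rational
with smaller positive numerator -/
lemma rat_step (q : ℚ) (h0 : 0 < q) (h1 : q ≤ 1) (hnum : 2 ≤ q.num) :
    ∃ q' : ℚ, (q' : ℝ) = engelT (q : ℝ) ∧ 0 < q' ∧ q' ≤ 1 ∧ q'.num < q.num := by
  have hq0 : (0:ℝ) < (q:ℝ) := by exact_mod_cast h0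
  set d : ℕ := engelD1 (q:ℝ) with hd
  have hcast : (((d : ℚ) * q - 1 : ℚ) : ℝ) = engelT (q:ℝ) := by push_cast [engelT]; ring
  have hpos : 0 < (d : ℚ) * q - 1 := by
    have h := engelT_pos hq0
    rw [← hcast] at h
    exact_mod_cast h
  have hle1 : (d : ℚ) * q - 1 ≤ 1 := by
    have h2 := (engelT_le hq0).trans (by exact_mod_cast h1 : (q:ℝ) ≤ 1)
    rw [← hcast] at h2
    exact_mod_cast h2
  have ha0 : (0:ℤ) < q.num := by positivity
  have hb0 : (0:ℤ) < (q.den : ℤ) := by exact_mod_cast q.pos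
  have hqab : (q : ℝ) = (q.num : ℝ) / (q.den : ℝ) := by
    have := Rat.num_div_den q
    exact_mod_cast congrArg (fun r : ℚ => (r : ℝ)) this.symm
  have h1q : 1/(q:ℝ) = (q.den : ℝ)/(q.num : ℝ) := by rw [hqab, one_div_div]
  have hgt : (q.den : ℤ) < (d:ℤ) * q.num := by
    have h := engelD1_gt hq0
    rw [h1q, div_lt_iff₀ (by exact_mod_cast ha0)] at h
    have h' : (q.den : ℝ) < (d:ℝ) * (q.num : ℝ) := by rw [← hd] at h; linarith
    exact_mod_cast h'
  have hlt : ((d:ℤ) - 1) * q.num < (q.den : ℤ) := by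
    have hle : ((d:ℤ) - 1) * q.num ≤ (q.den : ℤ) := by
      have h := engelD1_le hq0
      rw [h1q, le_div_iff₀ (by exact_mod_cast ha0)] at h
      have h' : ((d:ℝ) - 1) * (q.num : ℝ) ≤ (q.den : ℝ) := by rw [← hd] at h; linarith
      exact_mod_cast h'
    rcases lt_or_eq_of_le hle with h | h
    · exact h
    · exfalso
      have hdvd : q.num ∣ (q.den : ℤ) := ⟨(d:ℤ) - 1, by linarith⟩
      have hdvd' : q.num.natAbs ∣ q.den := by
        have := Int.natAbs_dvd_natAbs.2 hdvd
        simpa using this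
      have := q.reduced.eq_one_of_dvd hdvd'
      omega
  -- the new rational equals (d*num - den)/den
  have hden : ((q.den:ℚ)) ≠ 0 := by
    exact_mod_cast q.pos.ne'
  have hqd : q * (q.den:ℚ) = (q.num:ℚ) := Rat.mul_den_eq_num q
  have hq' : ((d:ℚ) * q - 1) = Rat.divInt ((d:ℤ) * q.num - (q.den:ℤ) : ℤ) (q.den : ℤ) := by
    rw [Rat.divInt_eq_div, eq_div_iff (by exact_mod_cast q.pos.ne' : ((q.den:ℤ):ℚ) ≠ 0)]
    push_cast
    linear_combination (d:ℚ) * hqd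
  have hdvd : ((d:ℚ) * q - 1).num ∣ ((d:ℤ) * q.num - (q.den:ℤ)) := by
    rw [hq']; exact Rat.num_dvd _ hb0.ne'
  have hnum_pos : 0 < ((d:ℚ) * q - 1).num := Rat.num_pos.2 hpos
  have hnum_le : ((d:ℚ) * q - 1).num ≤ (d:ℤ) * q.num - (q.den:ℤ) :=
    Int.le_of_dvd (by linarith) hdvd
  exact ⟨(d:ℚ) * q - 1, hcast, hpos, hle1, by linarith⟩

lemma rat_unit_fraction : ∀ p : ℕ, ∀ q : ℚ, 0 < q → q ≤ 1 → q.num.toNat ≤ p →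
    ∃ N k : ℕ, 1 ≤ k ∧ engelT^[N] (q:ℝ) = 1/(k:ℝ) := by
  intro p
  induction p with
  | zero => intro q h0 _ hp; exfalso; have := Rat.num_pos.2 h0; omega
  | succ p ih =>
    intro q h0 h1 hp
    rcases le_or_gt 2 q.num with h2 | h2
    · obtain ⟨q', hq', h0', h1', hlt⟩ := rat_step q h0 h1 h2
      obtain ⟨N, k, hk, hNk⟩ := ih q' h0' h1' (by omega)
      refine ⟨N + 1, k, hk, ?_⟩
      rw [Function.iterate_succ_apply, ← hq', hNk]
    · -- q.num = 1, so q = 1/q.den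
      have hnum1 : q.num = 1 := by have := Rat.num_pos.2 h0; omega
      refine ⟨0, q.den, q.pos, ?_⟩
      simp only [Function.iterate_zero, id_eq]
      conv_lhs => rw [← Rat.num_div_den q, hnum1]
      push_cast
      ring

lemma engelD1_lt_of_small {u : ℝ} (hu : 0 < u) {M : ℕ} (h : (M:ℝ) * u < 1) :
    M < engelD1 u := by
  have h1 := engelD1_gt hu
  have h2 : (M:ℝ) < 1/u := (lt_div_iff₀ hu).2 (by linarith)
  have : (M:ℝ) < (engelD1 u : ℝ) := lt_trans h2 h1
  exact_mod_cast this

lemma engelD1_right_unit {m : ℕ} (hm : 2 ≤ m) {u : ℝ}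
    (h1 : 1/(m:ℝ) < u) (h2 : u < 1/((m:ℝ)-1)) : engelD1 u = m := by
  have hm0 : (0:ℝ) < (m:ℝ) := by positivity
  have hm1 : (0:ℝ) < (m:ℝ) - 1 := by
    have : (2:ℝ) ≤ (m:ℝ) := by exact_mod_cast hm
    linarith
  have hu0 : 0 < u := lt_trans (by positivity) h1
  have hc : ((m - 1 : ℕ) : ℝ) = (m:ℝ) - 1 := by
    have h1' : (1:ℕ) ≤ m := by omega
    push_cast [Nat.cast_sub h1']
    ring
  have hf : ⌊1/u⌋₊ = m - 1 := by
    rw [Nat.floor_eq_iff (by positivity)]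
    have h2' : ((m:ℝ)-1) * u < 1 := by
      rw [lt_div_iff₀ hm1] at h2; linarith
    have h1' : 1 < (m:ℝ) * u := by
      rw [div_lt_iff₀ hm0] at h1; linarith
    constructor
    · rw [hc, le_div_iff₀ hu0]; linarith
    · rw [hc, div_lt_iff₀ hu0]; linarith
  simp only [engelD1, hf]
  omega

/-- At every rational `x ∈ (0,1]`, the Engel digit coding map is left-continuous
(`lim_{y↑x} f(y) = f(x)`), while as `z ↓ x` within the domain `(0,1]` the coding
converges to the terminating code `α' ≠ f(x)`. -/
theorem engelCoding_left_cont_not_right_cont (x : ℝ) (hx : x ∈ Set.Ioc (0 : ℝ) 1)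
    (hrat : ∃ q : ℚ, (q : ℝ) = x) :
    Tendsto engelCoding (nhdsWithin x (Set.Ioo (0 : ℝ) x)) (nhds (engelCoding x)) ∧
    ∃ α' : ℕ → ℕ∞, α' ≠ engelCoding x ∧
      Tendsto engelCoding (nhdsWithin x (Set.Ioc (0 : ℝ) 1 ∩ Set.Ioi x)) (nhds α') := by
  obtain ⟨hx0, hx1⟩ := hx
  constructor
  · -- left continuity
    rw [tendsto_pi_nhds]
    intro n
    have key : ∀ᶠ y in nhdsWithin x (Set.Ioo (0:ℝ) x),
        engelCoding y n = engelCoding x n := by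
      obtain ⟨ε, hε, hprop⟩ := left_iter hx0 (n+1) one_pos
      rw [eventually_iff, Metric.mem_nhdsWithin_iff]
      refine ⟨ε, hε, ?_⟩
      rintro y ⟨hy1, hy2, hy3⟩
      have hyl : x - ε < y := by
        rw [Metric.mem_ball, Real.dist_eq, abs_lt] at hy1; linarith
      have hdig := (hprop y hyl hy3.le).1 n (Nat.lt_succ_self n)
      simp [engelCoding, hdig]
    exact tendsto_const_nhds.congr' (key.mono fun y hy => hy.symm)
  · rcases eq_or_lt_of_le hx1 with heq | hlt
    · -- x = 1 : the right filter is trivial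
      refine ⟨fun _ => ⊤, ?_, ?_⟩
      · intro h
        have h1 := congrFun h 0
        simp [engelCoding] at h1
      · have hempty : Set.Ioc (0:ℝ) 1 ∩ Set.Ioi x = ∅ := by
          ext z
          simp only [Set.mem_inter_iff, Set.mem_Ioc, Set.mem_Ioi,
            Set.mem_empty_iff_false, iff_false, not_and]
          rintro ⟨_, hz1⟩ hz2
          rw [heq] at hz2
          linarith
        rw [hempty, nhdsWithin_empty]
        exact tendsto_bot
    · -- x < 1
      obtain ⟨q, hq⟩ := hrat
      have hq0 : 0 < q := by rw [← hq] at hx0; exact_mod_cast hx0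
      have hq1 : q ≤ 1 := by rw [← hq] at hx1; exact_mod_cast hx1
      classical
      have hP : ∃ N, ∃ k : ℕ, 1 ≤ k ∧ engelT^[N] x = 1/(k:ℝ) := by
        obtain ⟨N0, k0, hk0, hNk0⟩ := rat_unit_fraction q.num.toNat q hq0 hq1 le_rfl
        exact ⟨N0, k0, hk0, by rw [← hq]; exact hNk0⟩
      set N := Nat.find hP with hN
      obtain ⟨m, hm1, hmEq⟩ := Nat.find_spec hP
      have hm2 : 2 ≤ m := by
        by_contra h
        have hm1' : m = 1 := by omega
        rw [hm1'] at hmEq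
        have hle := iter_le hx0 N
        rw [hmEq] at hle
        norm_num at hle
        linarith
      have hmR : (2:ℝ) ≤ (m:ℝ) := by exact_mod_cast hm2
      have hm0R : (0:ℝ) < (m:ℝ) := by linarith
      have hm1R : (0:ℝ) < (m:ℝ) - 1 := by linarith
      have hδ₀ : (0:ℝ) < 1/((m:ℝ)-1) - 1/(m:ℝ) := by
        have := one_div_lt_one_div_of_lt hm1R (by linarith : (m:ℝ) - 1 < (m:ℝ))
        linarith
      have hni : ∀ j < N, (⌊1/(engelT^[j] x)⌋₊ : ℝ) < 1/(engelT^[j] x) := by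
        intro j hj
        have hw0 : 0 < engelT^[j] x := iter_pos hx0 j
        have hw1 : engelT^[j] x ≤ 1 := (iter_le hx0 j).trans hx1
        have hle : (⌊1/(engelT^[j] x)⌋₊ : ℝ) ≤ 1/(engelT^[j] x) :=
          Nat.floor_le (by positivity)
        rcases lt_or_eq_of_le hle with h | h
        · exact h
        · exfalso
          have hge1 : (1:ℝ) ≤ 1/(engelT^[j] x) := by
            rw [le_div_iff₀ hw0]; linarith
          have hk1 : 1 ≤ ⌊1/(engelT^[j] x)⌋₊ := Nat.le_floor (by exact_mod_cast hge1)
          have heqj : engelT^[j] x = 1/((⌊1/(engelT^[j] x)⌋₊ : ℕ) : ℝ) := by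
            rw [h, one_div_one_div]
          exact Nat.find_min hP hj ⟨_, hk1, heqj⟩
      -- the general "eventually" principle on the right
      have hev : ∀ δ : ℝ, 0 < δ → ∀ᶠ z in nhdsWithin x (Set.Ioc (0:ℝ) 1 ∩ Set.Ioi x),
          (∀ j' < N, engelDigit z j' = engelDigit x j') ∧
          engelT^[N] x < engelT^[N] z ∧ engelT^[N] z < engelT^[N] x + δ ∧ x < z := by
        intro δ hδ
        obtain ⟨ε, hε, hprop⟩ := right_iter hx0 N hni hδ
        rw [eventually_iff, Metric.mem_nhdsWithin_iff]
        refine ⟨ε, hε, ?_⟩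
        rintro z ⟨hz1, ⟨_, _⟩, hz3⟩
        have hlt' : z < x + ε := by
          rw [Metric.mem_ball, Real.dist_eq, abs_lt] at hz1; linarith
        obtain ⟨a, b, c⟩ := hprop z hz3 hlt'
        exact ⟨a, b, c, hz3⟩
      refine ⟨fun j => if j < N then engelCoding x j else if j = N then (m:ℕ∞) else ⊤,
        ?_, ?_⟩
      · intro h
        have h1 := congrFun h (N+1)
        rw [if_neg (by omega), if_neg (by omega)] at h1
        simp [engelCoding] at h1
      · rw [tendsto_pi_nhds]
        intro j
        show Tendsto (fun z => engelCoding z j) _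
          (nhds (if j < N then engelCoding x j else if j = N then (m:ℕ∞) else ⊤))
        rcases lt_trichotomy j N with hjN | hjN | hjN
        · rw [if_pos hjN]
          refine Tendsto.congr' (f₁ := fun _ => engelCoding x j) ?_ tendsto_const_nhds
          filter_upwards [hev 1 one_pos] with z hz
          simp [engelCoding, hz.1 j hjN]
        · rw [if_neg (by omega), if_pos hjN]
          refine Tendsto.congr' (f₁ := fun _ => ((m:ℕ∞))) ?_ tendsto_const_nhds
          filter_upwards [hev (1/((m:ℝ)-1) - 1/(m:ℝ)) hδ₀] with z hz
          obtain ⟨_, hb, hc, _⟩ := hz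
          rw [hmEq] at hb hc
          have hd1 : engelD1 (engelT^[N] z) = m :=
            engelD1_right_unit hm2 (by rw [hN] at hb ⊢; exact hb) (by
              rw [hN] at hc ⊢; linarith)
          subst hjN
          simp [engelCoding, engelDigit, hd1]
        · rw [if_neg (by omega), if_neg (by omega)]
          rw [ENat.tendsto_nhds_top_iff_natCast_lt]
          intro M
          have hδpos : (0:ℝ) < min (1/((m:ℝ)-1) - 1/(m:ℝ)) (1/((m:ℝ)*((M:ℝ)+1))) :=
            lt_min hδ₀ (by positivity)
          filter_upwards [hev _ hδpos] with z hz
          obtain ⟨_, hb, hc, hxz⟩ := hz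
          rw [hmEq] at hb hc
          set w := engelT^[N] z with hw
          have hd1 : engelD1 w = m := engelD1_right_unit hm2 hb (by
            have := min_le_left (1/((m:ℝ)-1) - 1/(m:ℝ)) (1/((m:ℝ)*((M:ℝ)+1)))
            linarith)
          have hz0 : (0:ℝ) < z := lt_trans hx0 hxz
          have hsucc : engelT^[N+1] z = (m:ℝ) * w - 1 := by
            rw [Function.iterate_succ_apply', ← hw]
            simp [engelT, hd1]
          have hsucc_pos : (0:ℝ) < (m:ℝ) * w - 1 := by
            rw [div_lt_iff₀ hm0R] at hb; linarith
          have hsucc_small : (m:ℝ) * w - 1 < (m:ℝ) * (1/((m:ℝ)*((M:ℝ)+1))) := by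
            have h1 : w < 1/(m:ℝ) + 1/((m:ℝ)*((M:ℝ)+1)) := by
              have := min_le_right (1/((m:ℝ)-1) - 1/(m:ℝ)) (1/((m:ℝ)*((M:ℝ)+1)))
              linarith
            have : (m:ℝ) * (1/(m:ℝ)) = 1 := by field_simp
            nlinarith
          have hmm : (m:ℝ) * (1/((m:ℝ)*((M:ℝ)+1))) = 1/((M:ℝ)+1) := by
            field_simp
          have hiter_eq : engelT^[j] z = engelT^[j-(N+1)] (engelT^[N+1] z) := by
            rw [← Function.iterate_add_apply]
            congr 1
            omega
          have hjle : engelT^[j] z ≤ engelT^[N+1] z := by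
            rw [hiter_eq]
            exact iter_le (by rw [hsucc]; exact hsucc_pos) _
          have hjpos : 0 < engelT^[j] z := iter_pos hz0 j
          have hsmall : (M:ℝ) * engelT^[j] z < 1 := by
            have h1 : engelT^[j] z < 1/((M:ℝ)+1) := by
              rw [hsucc] at hjle
              linarith [hmm ▸ hsucc_small]
            have h2 : (0:ℝ) ≤ (M:ℝ) := Nat.cast_nonneg M
            have h3 : ((M:ℝ)+1) * engelT^[j] z < 1 := by
              rw [lt_div_iff₀ (by positivity : (0:ℝ) < (M:ℝ)+1)] at h1
              linarith
            nlinarith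
          have hMlt : M < engelDigit z j := engelD1_lt_of_small hjpos hsmall
          simp only [engelCoding]
          exact_mod_cast hMlt
end
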